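/- (Bezrukov) Let H and G be finite simple graphs with nested solutions, with vertex sets identified with {0,…,|V_H|−1} and {0,…,|V_G|−1} via optimal orders. If A ⊆ V_H × V_G is compressed, then I_{H□G}(A) = Σ_{(x,y) ∈ A} ( δ_H(x+1) + δ_G(y+1) ), where δ_H(m) = I_H(m) − I_H(m−1) and δ_G(m) = I_G(m) − I_G(m−1). -/

import Mathlib

open Finset
open scoped Classical

/-- Number of edges of `G` with both endpoints in `A`. -/
noncomputable def edgesIn {V : Type*} [Fintype V] (G : SimpleGraph V) (A : Finset V) : ℕ :=
  (G.edgeFinset.filter (fun e => ∀ v ∈ e, v ∈ A)).card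

/-- `I_G(m)`: maximum number of induced edges over all `m`-subsets. -/
noncomputable def maxEdgesIn {V : Type*} [Fintype V] (G : SimpleGraph V) (m : ℕ) : ℕ :=
  (Finset.univ.powersetCard m).sup (edgesIn G)

/-- The `δ`-sequence of `G`. -/
noncomputable def deltaSeq {V : Type*} [Fintype V] (G : SimpleGraph V) (m : ℕ) : ℤ :=
  (maxEdgesIn G m : ℤ) - (maxEdgesIn G (m - 1) : ℤ)

/-- `G` has nested solutions. -/
def hasNS {V : Type*} [Fintype V] (G : SimpleGraph V) : Prop :=
  ∃ A : ℕ → Finset V,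
    (∀ i, 1 ≤ i → i < Fintype.card V → A i ⊆ A (i + 1)) ∧
    (∀ i, 1 ≤ i → i ≤ Fintype.card V →
      (A i).card = i ∧ edgesIn G (A i) = maxEdgesIn G i)

/-- `G` is `δ`-dense. -/
def deltaDense {V : Type*} [Fintype V] (G : SimpleGraph V) : Prop :=
  ∀ i, 2 ≤ i → i ≤ Fintype.card V → deltaSeq G i ≤ deltaSeq G (i - 1) → 2 ≤ deltaSeq G i

/-- The `d`-th cartesian power of `G`. -/
def cartPower {V : Type*} (G : SimpleGraph V) (d : ℕ) : SimpleGraph (Fin d → V) where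
  Adj x y := ∃ i, G.Adj (x i) (y i) ∧ ∀ j, j ≠ i → x j = y j
  symm := by
    constructor
    rintro x y ⟨i, h, hj⟩
    exact ⟨i, h.symm, fun j hje => (hj j hje).symm⟩
  loopless := by
    constructor
    rintro x ⟨i, h, -⟩
    exact G.irrefl h

/-- The initial segment `{0, …, k-1}` of `Fin N`. -/
def finSeg (N k : ℕ) : Finset (Fin N) :=
  Finset.univ.filter (fun v => (v : ℕ) < k)

/-- The set of the first `m` elements under a (strict total) order `r`. -/
noncomputable def initSeg {α : Type*} [Fintype α] (r : α → α → Prop) (m : ℕ) : Finset α :=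
  Finset.univ.filter (fun u => (Finset.univ.filter (fun w => r w u)).card < m)

/-- Strict lexicographic order on tuples. -/
def lexLt {n N : ℕ} (x y : Fin n → Fin N) : Prop :=
  ∃ i, (∀ j, j < i → x j = y j) ∧ x i < y i

/-- Strict colexicographic order on tuples. -/
def colexLt {n N : ℕ} (x y : Fin n → Fin N) : Prop :=
  ∃ i, (∀ j, i < j → x j = y j) ∧ x i < y i

/-- Strict lexicographic order on pairs. -/
def lexPair {N : ℕ} (p q : Fin N × Fin N) : Prop :=
  p.1 < q.1 ∨ (p.1 = q.1 ∧ p.2 < q.2)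

/-- Strict colexicographic order on pairs. -/
def colexPair {N : ℕ} (p q : Fin N × Fin N) : Prop :=
  p.2 < q.2 ∨ (p.2 = q.2 ∧ p.1 < q.1)

/-- A subset of `Fin M × Fin N` is compressed. -/
def IsCompressed {M N : ℕ} (A : Finset (Fin M × Fin N)) : Prop :=
  (∀ a : Fin M, ∀ y y' : Fin N, (a, y) ∈ A → y' ≤ y → (a, y') ∈ A) ∧
  (∀ b : Fin N, ∀ x x' : Fin M, (x, b) ∈ A → x' ≤ x → (x', b) ∈ A)

/-- Number of boundary edges: edges with exactly one endpoint in `A`. -/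
noncomputable def edgesBd {V : Type*} [Fintype V] (G : SimpleGraph V) (A : Finset V) : ℕ :=
  (G.edgeFinset.filter (fun e => ∃ u ∈ e, ∃ v ∈ e, u ∈ A ∧ v ∉ A)).card

section Helpers
open SimpleGraph
variable {V : Type*} [Fintype V]

lemma edgesIn_empty (G : SimpleGraph V) : edgesIn G (∅ : Finset V) = 0 := by
  unfold edgesIn
  rw [Finset.card_eq_zero, Finset.filter_eq_empty_iff]
  intro e _
  induction e using Sym2.ind with
  | _ u v =>
    simp only [Finset.notMem_empty, imp_false, not_forall]
    exact ⟨u, fun h => h (Sym2.mem_mk_left u v)⟩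

lemma maxEdgesIn_zero (G : SimpleGraph V) : maxEdgesIn G 0 = 0 := by
  unfold maxEdgesIn
  rw [Finset.powersetCard_zero, Finset.sup_singleton, edgesIn_empty]

lemma two_mul_edgesIn (G : SimpleGraph V) (A : Finset V) :
    2 * edgesIn G A = ((A ×ˢ A).filter fun p => G.Adj p.1 p.2).card := by
  classical
  let G' : SimpleGraph V :=
    { Adj := fun u v => G.Adj u v ∧ u ∈ A ∧ v ∈ A
      symm := ⟨fun u v h => ⟨h.1.symm, h.2.2, h.2.1⟩⟩
      loopless := ⟨fun u h => G.irrefl h.1⟩ }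
  have h1 : edgesIn G A = G'.edgeFinset.card := by
    unfold edgesIn
    congr 1
    ext e
    induction e using Sym2.ind with
    | _ u v =>
      simp only [Finset.mem_filter, mem_edgeFinset, mem_edgeSet, Sym2.mem_iff]
      constructor
      · rintro ⟨h, hm⟩
        exact ⟨h, hm u (Or.inl rfl), hm v (Or.inr rfl)⟩
      · rintro ⟨h, hu, hv⟩
        refine ⟨h, ?_⟩
        rintro w (rfl | rfl)
        · exact hu
        · exact hv
  rw [h1, SimpleGraph.two_mul_card_edgeFinset]
  congr 1
  ext p
  obtain ⟨u, v⟩ := p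
  simp only [Finset.mem_filter, Finset.mem_univ, true_and, Finset.mem_product]
  show G'.Adj u v ↔ _
  constructor
  · rintro ⟨h, hu, hv⟩; exact ⟨⟨hu, hv⟩, h⟩
  · rintro ⟨⟨hu, hv⟩, h⟩; exact ⟨h, hu, hv⟩

lemma card_finSeg {N k : ℕ} (hk : k ≤ N) : (finSeg N k).card = k := by
  have h := Finset.card_nbij (s := finSeg N k) (t := Finset.range k) (fun v => (v : ℕ))
    (by intro v hv
        simp only [finSeg, Finset.mem_coe, Finset.mem_filter] at hv
        simpa using hv.2)
    (by intro v hv w hw h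
        exact Fin.val_injective h)
    (by intro j hj
        simp only [Finset.coe_range, Set.mem_Iio] at hj
        exact ⟨⟨j, lt_of_lt_of_le hj hk⟩, by simp [finSeg, hj], rfl⟩)
  rwa [Finset.card_range] at h

lemma downclosed_eq_finSeg {N : ℕ} (S : Finset (Fin N))
    (hS : ∀ y ∈ S, ∀ y' : Fin N, y' ≤ y → y' ∈ S) :
    S = finSeg N S.card := by
  ext y
  simp only [finSeg, Finset.mem_filter, Finset.mem_univ, true_and]
  constructor
  · intro hy
    have hsub : finSeg N ((y : ℕ) + 1) ⊆ S := by
      intro v hv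
      simp only [finSeg, Finset.mem_filter] at hv
      exact hS y hy v (by omega)
    have := Finset.card_le_card hsub
    rwa [card_finSeg (by omega)] at this
  · intro hy
    by_contra hns
    have hsub : S ⊆ finSeg N (y : ℕ) := by
      intro v hv
      simp only [finSeg, Finset.mem_filter, Finset.mem_univ, true_and]
      by_contra hvy
      exact hns (hS v hv y (by omega))
    have := Finset.card_le_card hsub
    rw [card_finSeg (by omega)] at this
    omega

lemma telescope {N : ℕ} (G : SimpleGraph (Fin N)) :
    ∀ k, k ≤ N → ∑ v ∈ finSeg N k, deltaSeq G ((v : ℕ) + 1) = (maxEdgesIn G k : ℤ) := by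
  intro k
  induction k with
  | zero =>
    intro _
    rw [maxEdgesIn_zero, Nat.cast_zero]
    convert Finset.sum_empty
    ext v; simp [finSeg]
  | succ k ih =>
    intro hk
    have hkN : k < N := hk
    have hins : finSeg N (k + 1) = insert (⟨k, hkN⟩ : Fin N) (finSeg N k) := by
      ext v
      simp only [finSeg, Finset.mem_filter, Finset.mem_univ, true_and, Finset.mem_insert]
      constructor
      · intro h
        rcases Nat.lt_succ_iff_lt_or_eq.mp h with h | h
        · exact Or.inr h
        · exact Or.inl (Fin.ext h)
      · rintro (rfl | h)
        · exact Nat.lt_succ_self k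
        · omega
    rw [hins, Finset.sum_insert (by simp [finSeg]), ih (le_of_lt hkN)]
    unfold deltaSeq
    push_cast
    ring

end Helpers
section MainHelpers
open SimpleGraph

lemma inner_reindex {α β : Type*} [Fintype β] [DecidableEq α] (A : Finset (α × β)) (x : α)
    (f : β → ℤ) :
    ∑ p ∈ A.filter (fun p => p.1 = x), f p.2
      = ∑ y ∈ Finset.univ.filter (fun y => (x, y) ∈ A), f y := by
  classical
  apply Finset.sum_nbij' (i := fun p => p.2) (j := fun y => (x, y))
  · intro p hp
    simp only [Finset.mem_filter] at hp
    refine Finset.mem_filter.mpr ⟨Finset.mem_univ _, ?_⟩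
    rw [← hp.2]
    exact hp.1
  · intro y hy
    simp only [Finset.mem_filter] at hy
    exact Finset.mem_filter.mpr ⟨hy.2, rfl⟩
  · intro p hp
    simp only [Finset.mem_filter] at hp
    rw [← hp.2]
  · intro y _
    rfl
  · intro p _
    rfl

lemma sum_snd_fiber {α β : Type*} [Fintype α] [Fintype β] [DecidableEq α]
    (A : Finset (α × β)) (f : β → ℤ) :
    ∑ p ∈ A, f p.2 = ∑ x : α, ∑ y ∈ Finset.univ.filter (fun y => (x, y) ∈ A), f y := by
  classical
  rw [← Finset.sum_fiberwise_of_maps_to (g := fun p : α × β => p.1) (t := Finset.univ)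
    (fun _ _ => Finset.mem_univ _) (fun p => f p.2)]
  exact Finset.sum_congr rfl fun x _ => inner_reindex A x f

lemma fiber_card_eq {α : Type*} [Fintype α] [DecidableEq α] {N : ℕ} (G : SimpleGraph (Fin N))
    (A : Finset (α × Fin N)) (x : α) :
    ((((A ×ˢ A).filter fun p => p.1.1 = p.2.1 ∧ G.Adj p.1.2 p.2.2).filter
        (fun p => p.1.1 = x)).card : ℕ)
      = (((Finset.univ.filter (fun y => (x, y) ∈ A)) ×ˢ
          (Finset.univ.filter (fun y => (x, y) ∈ A))).filter fun q => G.Adj q.1 q.2).card := by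
  classical
  apply Finset.card_nbij' (i := fun p => (p.1.2, p.2.2))
    (j := fun q => ((x, q.1), (x, q.2)))
  · intro p hp
    simp only [Finset.mem_coe, Finset.mem_filter, Finset.mem_product, Finset.mem_univ, true_and] at hp ⊢
    obtain ⟨⟨⟨h1A, h2A⟩, heq, hadj⟩, hx⟩ := hp
    have e1 : p.1 = (x, p.1.2) := by rw [← hx]
    have e2 : p.2 = (x, p.2.2) := by rw [← hx, heq]
    refine ⟨⟨?_, ?_⟩, hadj⟩
    · rwa [e1] at h1A
    · rwa [e2] at h2A
  · intro q hq
    simp only [Finset.mem_coe, Finset.mem_filter, Finset.mem_product, Finset.mem_univ, true_and] at hq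
    refine Finset.mem_filter.mpr ⟨Finset.mem_filter.mpr
      ⟨Finset.mem_product.mpr ⟨hq.1.1, hq.1.2⟩, rfl, hq.2⟩, rfl⟩
  · intro p hp
    simp only [Finset.mem_coe, Finset.mem_filter, Finset.mem_product] at hp
    obtain ⟨⟨_, heq, _⟩, hx⟩ := hp
    have e1 : p.1 = (x, p.1.2) := by rw [← hx]
    have e2 : p.2 = (x, p.2.2) := by rw [← hx, heq]
    show ((x, p.1.2), (x, p.2.2)) = p
    rw [← e1, ← e2]
  · intro q _
    rfl

/-- The key per-coordinate computation. -/
lemma key_count {α : Type*} [Fintype α] [DecidableEq α] {N : ℕ} (G : SimpleGraph (Fin N))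
    (hG : ∀ k, k ≤ N → edgesIn G (finSeg N k) = maxEdgesIn G k)
    (A : Finset (α × Fin N))
    (hA : ∀ a : α, ∀ y y' : Fin N, (a, y) ∈ A → y' ≤ y → (a, y') ∈ A) :
    ((((A ×ˢ A).filter fun p => p.1.1 = p.2.1 ∧ G.Adj p.1.2 p.2.2).card : ℤ))
      = 2 * ∑ p ∈ A, deltaSeq G ((p.2 : ℕ) + 1) := by
  classical
  have hrowseg : ∀ x : α, (Finset.univ.filter (fun y => (x, y) ∈ A))
      = finSeg N (Finset.univ.filter (fun y => (x, y) ∈ A)).card := by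
    intro x
    apply downclosed_eq_finSeg
    intro y hy y' hy'
    simp only [Finset.mem_filter, Finset.mem_univ, true_and] at hy ⊢
    exact hA x y y' hy hy'
  have hrc : ∀ x : α, (Finset.univ.filter (fun y => (x, y) ∈ A)).card ≤ N := fun x => by
    simpa using Finset.card_le_univ (Finset.univ.filter (fun y => (x, y) ∈ A))
  have hedge : ∀ x : α, edgesIn G (Finset.univ.filter (fun y => (x, y) ∈ A))
      = maxEdgesIn G (Finset.univ.filter (fun y => (x, y) ∈ A)).card := by
    intro x
    conv_lhs => rw [hrowseg x]
    exact hG _ (hrc x)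
  have hcard : ((A ×ˢ A).filter fun p => p.1.1 = p.2.1 ∧ G.Adj p.1.2 p.2.2).card
      = ∑ x : α, (((A ×ˢ A).filter fun p => p.1.1 = p.2.1 ∧ G.Adj p.1.2 p.2.2).filter
          (fun p => p.1.1 = x)).card :=
    Finset.card_eq_sum_card_fiberwise (fun _ _ => Finset.mem_univ _)
  have hfib : ∀ x : α,
      (((A ×ˢ A).filter fun p => p.1.1 = p.2.1 ∧ G.Adj p.1.2 p.2.2).filter
        (fun p => p.1.1 = x)).card
      = 2 * maxEdgesIn G (Finset.univ.filter (fun y => (x, y) ∈ A)).card := by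
    intro x
    rw [fiber_card_eq G A x, ← two_mul_edgesIn, hedge x]
  have hsum : ∑ p ∈ A, deltaSeq G ((p.2 : ℕ) + 1)
      = ∑ x : α, (maxEdgesIn G (Finset.univ.filter (fun y => (x, y) ∈ A)).card : ℤ) := by
    rw [sum_snd_fiber A (fun y => deltaSeq G ((y : ℕ) + 1))]
    refine Finset.sum_congr rfl fun x _ => ?_
    have h := telescope G (Finset.univ.filter (fun y => (x, y) ∈ A)).card (hrc x)
    rw [← hrowseg x] at h
    convert h using 2
    exact Finset.filter_congr_decidable ..
  rw [hcard, hsum, Finset.mul_sum]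
  push_cast
  exact Finset.sum_congr rfl fun x _ => by rw [hfib x]; push_cast; ring

end MainHelpers

/-- Bezrukov.  `H` and `G` are graphs on `{0, …, M-1}` and
`{0, …, N-1}` whose identifications are optimal orders.  If
`A ⊆ V_H × V_G` is compressed, then
`I_{H□G}(A) = Σ_{(x,y) ∈ A} (δ_H(x+1) + δ_G(y+1))`. -/
theorem stmt_6 {M N : ℕ} (H : SimpleGraph (Fin M)) (G : SimpleGraph (Fin N))
    (hH : ∀ k, k ≤ M → edgesIn H (finSeg M k) = maxEdgesIn H k)
    (hG : ∀ k, k ≤ N → edgesIn G (finSeg N k) = maxEdgesIn G k)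
    (A : Finset (Fin M × Fin N)) (hA : IsCompressed A) :
    (edgesIn (H.boxProd G) A : ℤ) =
      ∑ p ∈ A, (deltaSeq H ((p.1 : ℕ) + 1) + deltaSeq G ((p.2 : ℕ) + 1)) := by
  classical
  set A' : Finset (Fin N × Fin M) := A.map (Equiv.prodComm (Fin M) (Fin N)).toEmbedding with hA'
  have hmemA' : ∀ q : Fin N × Fin M, q ∈ A' ↔ (q.2, q.1) ∈ A := by
    intro q
    rw [hA', Finset.mem_map_equiv]
    rfl
  -- split the doubled edge count
  have h2 : 2 * edgesIn (H.boxProd G) A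
      = ((A ×ˢ A).filter fun p => p.1.2 = p.2.2 ∧ H.Adj p.1.1 p.2.1).card
        + ((A ×ˢ A).filter fun p => p.1.1 = p.2.1 ∧ G.Adj p.1.2 p.2.2).card := by
    rw [two_mul_edgesIn]
    have hsplit : ((A ×ˢ A).filter fun p => (H.boxProd G).Adj p.1 p.2)
        = ((A ×ˢ A).filter fun p => p.1.2 = p.2.2 ∧ H.Adj p.1.1 p.2.1)
          ∪ ((A ×ˢ A).filter fun p => p.1.1 = p.2.1 ∧ G.Adj p.1.2 p.2.2) := by
      rw [← Finset.filter_or]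
      apply Finset.filter_congr
      intro p _
      simp only [SimpleGraph.boxProd_adj]
      tauto
    rw [hsplit, Finset.card_union_of_disjoint]
    rw [Finset.disjoint_left]
    intro p hp1 hp2
    simp only [Finset.mem_filter] at hp1 hp2
    exact hp1.2.2.ne hp2.2.1
  -- the G part
  have hGpart := key_count G hG A hA.1
  -- the H part via swapping
  have hA'' : ∀ a : Fin N, ∀ y y' : Fin M, (a, y) ∈ A' → y' ≤ y → (a, y') ∈ A' := by
    intro a y y' hy hle
    rw [hmemA'] at hy ⊢
    exact hA.2 a y y' hy hle
  have hHpart := key_count H hH A' hA''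
  have hP2 : ((A ×ˢ A).filter fun p => p.1.2 = p.2.2 ∧ H.Adj p.1.1 p.2.1).card
      = ((A' ×ˢ A').filter fun q => q.1.1 = q.2.1 ∧ H.Adj q.1.2 q.2.2).card := by
    apply Finset.card_nbij' (i := fun p => (p.1.swap, p.2.swap))
      (j := fun q => (q.1.swap, q.2.swap))
    · intro p hp
      simp only [Finset.mem_coe, Finset.mem_filter, Finset.mem_product] at hp
      refine Finset.mem_filter.mpr ⟨Finset.mem_product.mpr ⟨?_, ?_⟩, hp.2.1, hp.2.2⟩
      · rw [hmemA']; exact hp.1.1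
      · rw [hmemA']; exact hp.1.2
    · intro q hq
      simp only [Finset.mem_coe, Finset.mem_filter, Finset.mem_product, hmemA'] at hq
      refine Finset.mem_filter.mpr ⟨Finset.mem_product.mpr ⟨?_, ?_⟩, hq.2.1, hq.2.2⟩
      · exact hq.1.1
      · exact hq.1.2
    · intro p _
      simp [Prod.swap_swap]
    · intro q _
      simp [Prod.swap_swap]
  have hsumH : ∑ p ∈ A, deltaSeq H ((p.1 : ℕ) + 1)
      = ∑ q ∈ A', deltaSeq H ((q.2 : ℕ) + 1) := by
    rw [hA', Finset.sum_map]
    rfl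
  have main : (2 : ℤ) * (edgesIn (H.boxProd G) A : ℤ)
      = 2 * ∑ p ∈ A, (deltaSeq H ((p.1 : ℕ) + 1) + deltaSeq G ((p.2 : ℕ) + 1)) := by
    have h2' : (2 : ℤ) * (edgesIn (H.boxProd G) A : ℤ)
        = (((A ×ˢ A).filter fun p => p.1.2 = p.2.2 ∧ H.Adj p.1.1 p.2.1).card : ℤ)
          + (((A ×ˢ A).filter fun p => p.1.1 = p.2.1 ∧ G.Adj p.1.2 p.2.2).card : ℤ) := by
      exact_mod_cast h2
    rw [h2', hGpart]
    rw [show (((A ×ˢ A).filter fun p => p.1.2 = p.2.2 ∧ H.Adj p.1.1 p.2.1).card : ℤ)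
        = ((((A' ×ˢ A').filter fun q => q.1.1 = q.2.1 ∧ H.Adj q.1.2 q.2.2).card : ℤ)) by
      exact_mod_cast hP2]
    rw [hHpart, ← hsumH, Finset.sum_add_distrib]
    ring
  exact mul_left_cancel₀ two_ne_zero main
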